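/- Assume Assumptions A1, A2 and A3 hold, and let P be a real symmetric positive semidefinite solution of the ARE with Ã = Ā − B̄B̄ᵀP. Then every complex eigenvalue λ of Ã with Re(λ) ≥ 0 satisfies λ = 0; in other words, every nonzero eigenvalue of Ã has negative real part. -/

import Mathlib

open Matrix Filter Topology

/-- `Q(α) = D + A¹(α) − A²(α)` where `A¹(α)` keeps adjacency entries with `α i = -α j`
and `A²(α)` keeps adjacency entries with `α i = α j`. -/
noncomputable def Qmat {n : ℕ} (G : SimpleGraph (Fin n)) [DecidableRel G.Adj] (α : Fin n → ℝ) :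
    Matrix (Fin n) (Fin n) ℝ :=
  G.degMatrix ℝ
    + Matrix.of (fun i j => if α i = -α j then G.adjMatrix ℝ i j else 0)
    - Matrix.of (fun i j => if α i = α j then G.adjMatrix ℝ i j else 0)

/-- A pair `(M, N)` with `M : k×k`, `N : k×l` is controllable if the controllability
matrix `[N, MN, …, M^{k−1}N]` has full rank `k`. -/
def Controllable {K L : Type*} [Fintype K] [Fintype L] [DecidableEq K]
    (M : Matrix K K ℝ) (N : Matrix K L ℝ) : Prop :=
  (Matrix.of fun (i : K) (p : Fin (Fintype.card K) × L) => (M ^ (p.1 : ℕ) * N) i p.2).rank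
    = Fintype.card K

/-- `(M, C)` is observable iff `(Mᵀ, Cᵀ)` is controllable. -/
def Observable {K L : Type*} [Fintype K] [Fintype L] [DecidableEq K] [DecidableEq L]
    (M : Matrix K K ℝ) (C : Matrix L K ℝ) : Prop :=
  Controllable Mᵀ Cᵀ

open ComplexOrder

lemma mapC_conjTranspose {k l : Type*} (X : Matrix k l ℝ) :
    (X.map Complex.ofReal)ᴴ = Xᵀ.map Complex.ofReal := by
  ext i j; simp [conjTranspose_apply, Complex.conj_ofReal]

lemma mapC_mulVec_star {k l : Type*} [Fintype l] (X : Matrix k l ℝ) (v : l → ℂ) :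
    (X.map Complex.ofReal) *ᵥ (star v) = star ((X.map Complex.ofReal) *ᵥ v) := by
  funext i
  simp [mulVec, dotProduct, star_sum, Complex.conj_ofReal, mul_comm]

lemma mapC_mul {k l o : Type*} [Fintype l] (X : Matrix k l ℝ) (Y : Matrix l o ℝ) :
    (X * Y).map Complex.ofReal = X.map Complex.ofReal * Y.map Complex.ofReal :=
  Matrix.map_mul (f := Complex.ofRealHom)

lemma mapC_add {k l : Type*} (X Y : Matrix k l ℝ) :
    (X + Y).map Complex.ofReal = X.map Complex.ofReal + Y.map Complex.ofReal := by
  ext i j; simp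

lemma mapC_sub {k l : Type*} (X Y : Matrix k l ℝ) :
    (X - Y).map Complex.ofReal = X.map Complex.ofReal - Y.map Complex.ofReal := by
  ext i j; simp

lemma mapC_pow {k : Type*} [Fintype k] [DecidableEq k] (X : Matrix k k ℝ) (p : ℕ) :
    (X ^ p).map Complex.ofReal = (X.map Complex.ofReal) ^ p := by
  induction p with
  | zero => ext i j; simp [Matrix.one_apply]; split <;> simp
  | succ p ih => rw [pow_succ, pow_succ, mapC_mul, ih]

lemma mapC_transpose {k l : Type*} (X : Matrix k l ℝ) :
    Xᵀ.map Complex.ofReal = (X.map Complex.ofReal)ᵀ := by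
  ext i j; simp

lemma psdMapC {k : Type*} [Fintype k] {M : Matrix k k ℝ} (h : M.PosSemidef) :
    (M.map Complex.ofReal).PosSemidef := by
  obtain ⟨r, v, rfl⟩ := Matrix.posSemidef_iff_eq_sum_vecMulVec.mp h
  have heq : (∑ i, vecMulVec (v i) (star (v i))).map Complex.ofReal
      = ∑ i, vecMulVec (fun a => (v i a : ℂ)) (star (fun a => (v i a : ℂ))) := by
    ext a b
    simp [vecMulVec_apply, Matrix.sum_apply]
  rw [heq]
  exact Matrix.posSemidef_sum _ fun i _ => Matrix.posSemidef_vecMulVec_self_star _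

lemma psdBlock {k l : Type*} [Fintype k] [Fintype l] {M : Matrix k k ℂ} (h : M.PosSemidef) :
    (Matrix.fromBlocks M 0 0 (0 : Matrix l l ℂ)).PosSemidef := by
  refine Matrix.PosSemidef.of_dotProduct_mulVec_nonneg ?_ ?_
  · rw [Matrix.IsHermitian, fromBlocks_conjTranspose]
    simp [h.1.eq]
  · intro x
    have := h.dotProduct_mulVec_nonneg (x ∘ Sum.inl)
    simpa [fromBlocks_mulVec, dotProduct, Fintype.sum_sum_type, mulVec] using this

lemma Qmat_eq_diag {n : ℕ} (G : SimpleGraph (Fin n)) [DecidableRel G.Adj]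
    (α : Fin n → ℝ) (hα : ∀ i, α i = 1 ∨ α i = -1) :
    Qmat G α = Matrix.diagonal α * G.lapMatrix ℝ * Matrix.diagonal α := by
  ext i j
  rw [Qmat]
  simp only [Matrix.sub_apply, Matrix.add_apply, Matrix.of_apply,
    Matrix.diagonal_mul, Matrix.mul_diagonal, SimpleGraph.lapMatrix,
    Matrix.sub_apply, SimpleGraph.degMatrix, SimpleGraph.adjMatrix_apply,
    Matrix.diagonal_apply]
  by_cases hij : i = j
  · subst hij
    rcases hα i with h1 | h1 <;> simp [h1, SimpleGraph.irrefl]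
  · rcases hα i with h1 | h1 <;> rcases hα j with h2 | h2 <;>
      simp [h1, h2, hij] <;>
      first
      | (intro hcontra; exact absurd hcontra (by norm_num))
      | (split_ifs with hc hc' <;> norm_num at *)

lemma Qmat_posSemidef {n : ℕ} (G : SimpleGraph (Fin n)) [DecidableRel G.Adj]
    (α : Fin n → ℝ) (hα : ∀ i, α i = 1 ∨ α i = -1) : (Qmat G α).PosSemidef := by
  rw [Qmat_eq_diag G α hα]
  have hL := SimpleGraph.posSemidef_lapMatrix ℝ G
  have := hL.mul_mul_conjTranspose_same (Matrix.diagonal α)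
  simpa [Matrix.diagonal_conjTranspose] using this
/-- Under Assumptions A1 (connectedness), A2 (an equilibrium in the pattern set) and A3
(controllability/observability), for any symmetric PSD solution `P` of the ARE and
`Ã = Ā − B̄B̄ᵀP`, every complex eigenvalue `λ` of `Ã` with `Re λ ≥ 0` equals `0`. -/
theorem closedLoop_nonzero_eigenvalues_neg_re {n m : ℕ} (hn : 0 < n)
    (G : SimpleGraph (Fin n)) [DecidableRel G.Adj]
    (α : Fin n → ℝ) (hα : ∀ i, α i = 1 ∨ α i = -1)
    (p₀ : ℝ) (hp₀ : 0 < p₀) (a : ℝ)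
    (ι : Fin m → Fin n) (hι : StrictMono ι)
    -- the control matrix `B = [e_{i₁}, …, e_{i_m}]`
    (B : Matrix (Fin n) (Fin m) ℝ) (hB : B = Matrix.of fun i j => if i = ι j then 1 else 0)
    -- Assumption A1
    (hA1 : G.Connected)
    -- Assumption A2 : `∃ x* ∈ S(α)` and `u*` with `(−L + aI)x* + Bu* = 0`
    (hA2 : ∃ (xs : Fin n → ℝ) (us : Fin m → ℝ),
      (Qmat G α *ᵥ xs = 0 ∧ p₀ * Real.sqrt n ≤ Real.sqrt (∑ i, xs i ^ 2)) ∧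
      (-(G.lapMatrix ℝ) + a • (1 : Matrix (Fin n) (Fin n) ℝ)) *ᵥ xs + B *ᵥ us = 0)
    -- Assumption A3
    (hA3c : Controllable (-(G.lapMatrix ℝ) + a • (1 : Matrix (Fin n) (Fin n) ℝ)) B)
    (hA3o : Observable (-(G.lapMatrix ℝ) + a • (1 : Matrix (Fin n) (Fin n) ℝ)) (Qmat G α))
    -- the augmented matrices
    (Abar : Matrix (Fin n ⊕ Fin m) (Fin n ⊕ Fin m) ℝ)
    (hAbar : Abar = Matrix.fromBlocks
      (-(G.lapMatrix ℝ) + a • (1 : Matrix (Fin n) (Fin n) ℝ)) B 0 0)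
    (Bbar : Matrix (Fin n ⊕ Fin m) (Fin m) ℝ)
    (hBbar : Bbar = Matrix.fromRows (0 : Matrix (Fin n) (Fin m) ℝ) (1 : Matrix (Fin m) (Fin m) ℝ))
    (Qbar : Matrix (Fin n ⊕ Fin m) (Fin n ⊕ Fin m) ℝ)
    (hQbar : Qbar = Matrix.fromBlocks (Qmat G α) 0 0 0)
    -- `P` is a symmetric PSD solution of the ARE, `Ã` the closed-loop matrix
    (P : Matrix (Fin n ⊕ Fin m) (Fin n ⊕ Fin m) ℝ) (hP : P.PosSemidef)
    (hare : Abarᵀ * P + P * Abar - P * Bbar * Bbarᵀ * P + Qbar = 0)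
    (Atil : Matrix (Fin n ⊕ Fin m) (Fin n ⊕ Fin m) ℝ)
    (hAtil : Atil = Abar - Bbar * Bbarᵀ * P) :
    ∀ lam : ℂ, 0 ≤ lam.re →
      (∃ h : Fin n ⊕ Fin m → ℂ, h ≠ 0 ∧ Atil.map (Complex.ofReal) *ᵥ h = lam • h) →
      lam = 0 := by
  intro lam hre hev
  obtain ⟨h, hh0, hevec⟩ := hev
  by_contra hlam
  set M : Matrix (Fin n) (Fin n) ℝ :=
    -(G.lapMatrix ℝ) + a • (1 : Matrix (Fin n) (Fin n) ℝ) with hMdef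
  have hQpsd : (Qmat G α).PosSemidef := Qmat_posSemidef G α hα
  have hPt : Pᵀ = P := by
    have h1 := hP.1
    rw [Matrix.IsHermitian] at h1
    ext i j
    have := congrFun (congrFun h1 i) j
    simpa [Matrix.conjTranspose_apply] using this
  -- Key real identity
  have key : Atilᵀ * P + P * Atil + Qbar + P * (Bbar * Bbarᵀ) * P = 0 := by
    have hS : (Bbar * Bbarᵀ)ᵀ = Bbar * Bbarᵀ := by
      rw [Matrix.transpose_mul, Matrix.transpose_transpose]
    have hAt : Atilᵀ = Abarᵀ - P * (Bbar * Bbarᵀ) := by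
      rw [hAtil, Matrix.transpose_sub]
      congr 1
      rw [Matrix.transpose_mul, hS, hPt]
    have hare' : Abarᵀ * P + P * Abar - P * (Bbar * Bbarᵀ) * P + Qbar = 0 := by
      have hassoc : P * (Bbar * Bbarᵀ) * P = P * Bbar * Bbarᵀ * P := by
        rw [Matrix.mul_assoc P Bbar Bbarᵀ]
      rw [hassoc]
      exact hare
    rw [hAt, hAtil]
    have expand : (Abarᵀ - P * (Bbar * Bbarᵀ)) * P + P * (Abar - Bbar * Bbarᵀ * P)
          + Qbar + P * (Bbar * Bbarᵀ) * P
        = Abarᵀ * P + P * Abar - P * (Bbar * Bbarᵀ) * P + Qbar := by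
      have hassoc2 : Bbar * Bbarᵀ * P = (Bbar * Bbarᵀ) * P := rfl
      rw [hassoc2]
      noncomm_ring
    rw [expand]
    exact hare'
  -- complexify
  set Bc : Matrix (Fin n ⊕ Fin m) (Fin m) ℂ := Bbar.map Complex.ofReal with hBc
  set Pc : Matrix (Fin n ⊕ Fin m) (Fin n ⊕ Fin m) ℂ := P.map Complex.ofReal with hPcdef
  set Qc : Matrix (Fin n ⊕ Fin m) (Fin n ⊕ Fin m) ℂ := Qbar.map Complex.ofReal with hQcdef
  set Ac : Matrix (Fin n ⊕ Fin m) (Fin n ⊕ Fin m) ℂ := Atil.map Complex.ofReal with hAcdef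
  have hSc : (Bbar * Bbarᵀ).map Complex.ofReal = Bc * Bcᴴ := by
    rw [mapC_mul, hBc, ← mapC_conjTranspose]
  have hPSPc : (P * (Bbar * Bbarᵀ) * P).map Complex.ofReal = Pc * (Bc * Bcᴴ) * Pc := by
    rw [mapC_mul, mapC_mul, hSc, hPcdef]
  have keyC : Acᵀ * Pc + Pc * Ac + Qc + Pc * (Bc * Bcᴴ) * Pc = 0 := by
    have h0 := congrArg (fun X : Matrix (Fin n ⊕ Fin m) (Fin n ⊕ Fin m) ℝ =>
      X.map Complex.ofReal) key
    simp only [mapC_add] at h0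
    rw [hPSPc, mapC_mul, mapC_mul, mapC_transpose] at h0
    rw [show (0 : Matrix (Fin n ⊕ Fin m) (Fin n ⊕ Fin m) ℝ).map Complex.ofReal
      = 0 from Matrix.map_zero _ Complex.ofReal_zero] at h0
    exact h0
  -- quadratic forms
  have hqform := congrArg (fun X : Matrix (Fin n ⊕ Fin m) (Fin n ⊕ Fin m) ℂ =>
    star h ⬝ᵥ (X *ᵥ h)) keyC
  simp only [Matrix.add_mulVec, Matrix.zero_mulVec, dotProduct_add, dotProduct_zero] at hqform
  have hterm1 : star h ⬝ᵥ ((Acᵀ * Pc) *ᵥ h)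
      = (starRingEnd ℂ) lam * (star h ⬝ᵥ (Pc *ᵥ h)) := by
    rw [← Matrix.mulVec_mulVec, Matrix.dotProduct_mulVec, Matrix.vecMul_transpose,
      hAcdef, mapC_mulVec_star, hevec, star_smul, smul_dotProduct]
    simp [smul_eq_mul]
  have hterm2 : star h ⬝ᵥ ((Pc * Ac) *ᵥ h) = lam * (star h ⬝ᵥ (Pc *ᵥ h)) := by
    rw [← Matrix.mulVec_mulVec, hevec, Matrix.mulVec_smul, dotProduct_smul,
      smul_eq_mul]
  rw [hterm1, hterm2] at hqform
  -- positivity of the three forms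
  have hPcpsd : Pc.PosSemidef := psdMapC hP
  have hQcpsd : Qc.PosSemidef := by
    rw [hQcdef, hQbar, Matrix.fromBlocks_map]
    rw [show (0 : Matrix (Fin n) (Fin m) ℝ).map Complex.ofReal = 0 from
      Matrix.map_zero _ Complex.ofReal_zero]
    rw [show (0 : Matrix (Fin m) (Fin n) ℝ).map Complex.ofReal = 0 from
      Matrix.map_zero _ Complex.ofReal_zero]
    rw [show (0 : Matrix (Fin m) (Fin m) ℝ).map Complex.ofReal = 0 from
      Matrix.map_zero _ Complex.ofReal_zero]
    exact psdBlock (psdMapC hQpsd)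
  have heqN : (Bcᴴ * Pc)ᴴ * (Bcᴴ * Pc) = Pc * (Bc * Bcᴴ) * Pc := by
    rw [Matrix.conjTranspose_mul, Matrix.conjTranspose_conjTranspose, hPcpsd.1.eq]
    simp only [Matrix.mul_assoc]
  have hSpsd : (Pc * (Bc * Bcᴴ) * Pc).PosSemidef := by
    rw [← heqN]
    exact Matrix.posSemidef_conjTranspose_mul_self _
  have hpq0 : 0 ≤ star h ⬝ᵥ (Pc *ᵥ h) := hPcpsd.dotProduct_mulVec_nonneg h
  have hqq0 : 0 ≤ star h ⬝ᵥ (Qc *ᵥ h) := hQcpsd.dotProduct_mulVec_nonneg h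
  have hsq0 : 0 ≤ star h ⬝ᵥ ((Pc * (Bc * Bcᴴ) * Pc) *ᵥ h) := hSpsd.dotProduct_mulVec_nonneg h
  set pq := star h ⬝ᵥ (Pc *ᵥ h) with hpqdef
  set qq := star h ⬝ᵥ (Qc *ᵥ h) with hqqdef
  set sq := star h ⬝ᵥ ((Pc * (Bc * Bcᴴ) * Pc) *ᵥ h) with hsqdef
  rw [Complex.le_def] at hpq0 hqq0 hsq0
  simp only [Complex.zero_re, Complex.zero_im] at hpq0 hqq0 hsq0
  have hpqe : pq = ((pq.re : ℝ) : ℂ) := Complex.ext rfl (by simp [← hpq0.2])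
  have hqqe : qq = ((qq.re : ℝ) : ℂ) := Complex.ext rfl (by simp [← hqq0.2])
  have hsqe : sq = ((sq.re : ℝ) : ℂ) := Complex.ext rfl (by simp [← hsq0.2])
  rw [hpqe, hqqe, hsqe] at hqform
  have hrealC : ((2 * lam.re : ℝ) : ℂ) * ((pq.re : ℝ) : ℂ)
      + ((qq.re : ℝ) : ℂ) + ((sq.re : ℝ) : ℂ) = 0 := by
    rw [← Complex.add_conj]
    linear_combination hqform
  have hrealEq : 2 * lam.re * pq.re + qq.re + sq.re = 0 := by
    exact_mod_cast hrealC
  have hterm0 : 0 ≤ 2 * lam.re * pq.re :=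
    mul_nonneg (by linarith) hpq0.1
  have hqqre : qq.re = 0 := by linarith [hqq0.1, hsq0.1]
  have hsqre : sq.re = 0 := by linarith [hqq0.1, hsq0.1]
  -- Q̄ h = 0 and B̄ᵀ P h = 0
  have hQch : Qc *ᵥ h = 0 := by
    refine (hQcpsd.dotProduct_mulVec_zero_iff h).mp ?_
    rw [← hqqdef, hqqe, hqqre]
    simp
  have hsqz : sq = 0 := by rw [hsqe, hsqre]; simp
  have hNh : (Bcᴴ * Pc) *ᵥ h = 0 := by
    refine dotProduct_star_self_eq_zero.mp ?_
    rw [Matrix.star_mulVec, ← Matrix.dotProduct_mulVec, Matrix.mulVec_mulVec, heqN]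
    exact hsqz
  -- closed loop equals open loop on h
  have hBBPh : ((Bbar * Bbarᵀ * P).map Complex.ofReal) *ᵥ h = 0 := by
    have hmap : (Bbar * Bbarᵀ * P).map Complex.ofReal = Bc * (Bcᴴ * Pc) := by
      rw [mapC_mul, hSc, ← hPcdef, Matrix.mul_assoc]
    rw [hmap, ← Matrix.mulVec_mulVec, hNh, Matrix.mulVec_zero]
  have hAbarh : (Abar.map Complex.ofReal) *ᵥ h = lam • h := by
    have hsplit : Ac = Abar.map Complex.ofReal - (Bbar * Bbarᵀ * P).map Complex.ofReal := by
      rw [hAcdef, hAtil, mapC_sub]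
    rw [hsplit, Matrix.sub_mulVec, hBBPh, sub_zero] at hevec
    exact hevec
  -- block structure
  have hAbarC : Abar.map Complex.ofReal
      = Matrix.fromBlocks (M.map Complex.ofReal) (B.map Complex.ofReal)
        (0 : Matrix (Fin m) (Fin n) ℂ) (0 : Matrix (Fin m) (Fin m) ℂ) := by
    rw [hAbar, Matrix.fromBlocks_map]
    rw [show (0 : Matrix (Fin m) (Fin n) ℝ).map Complex.ofReal = 0 from
      Matrix.map_zero _ Complex.ofReal_zero]
    rw [show (0 : Matrix (Fin m) (Fin m) ℝ).map Complex.ofReal = 0 from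
      Matrix.map_zero _ Complex.ofReal_zero]
  rw [hAbarC, Matrix.fromBlocks_mulVec] at hAbarh
  have hu0 : ∀ j, h (Sum.inr j) = 0 := by
    intro j
    have := congrFun hAbarh (Sum.inr j)
    simp only [Sum.elim_inr, Matrix.zero_mulVec, Pi.add_apply, Pi.zero_apply,
      Pi.smul_apply, smul_eq_mul, add_zero] at this
    exact (mul_eq_zero.mp this.symm).resolve_left hlam
  set x : Fin n → ℂ := h ∘ Sum.inl with hxdef
  have hBu : (B.map Complex.ofReal) *ᵥ (h ∘ Sum.inr) = 0 := by
    have : h ∘ Sum.inr = 0 := funext fun j => hu0 j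
    rw [this, Matrix.mulVec_zero]
  have hMx : (M.map Complex.ofReal) *ᵥ x = lam • x := by
    funext i
    have := congrFun hAbarh (Sum.inl i)
    simp only [Sum.elim_inl, Pi.add_apply, Pi.smul_apply, smul_eq_mul] at this
    rw [congrFun hBu i] at this
    simpa [hxdef] using this
  have hQx : ((Qmat G α).map Complex.ofReal) *ᵥ x = 0 := by
    rw [hQcdef, hQbar, Matrix.fromBlocks_map] at hQch
    rw [show (0 : Matrix (Fin n) (Fin m) ℝ).map Complex.ofReal = 0 from
      Matrix.map_zero _ Complex.ofReal_zero] at hQch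
    rw [show (0 : Matrix (Fin m) (Fin n) ℝ).map Complex.ofReal = 0 from
      Matrix.map_zero _ Complex.ofReal_zero] at hQch
    rw [show (0 : Matrix (Fin m) (Fin m) ℝ).map Complex.ofReal = 0 from
      Matrix.map_zero _ Complex.ofReal_zero] at hQch
    rw [Matrix.fromBlocks_mulVec] at hQch
    funext i
    have := congrFun hQch (Sum.inl i)
    simpa [hxdef] using this
  have hx0 : x ≠ 0 := by
    intro hx0
    apply hh0
    funext i
    cases i with
    | inl i => exact congrFun hx0 i
    | inr j => exact hu0 j
  -- powers
  have hpowx : ∀ k : ℕ, ((M.map Complex.ofReal)) ^ k *ᵥ x = lam ^ k • x := by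
    intro k
    induction k with
    | zero => simp [Matrix.one_mulVec]
    | succ k ih =>
      rw [pow_succ, ← Matrix.mulVec_mulVec, hMx, Matrix.mulVec_smul, ih, smul_smul,
        pow_succ]
      ring_nf
  have hQMkC : ∀ k : ℕ, ((Qmat G α * M ^ k).map Complex.ofReal) *ᵥ x = 0 := by
    intro k
    rw [mapC_mul, mapC_pow, ← Matrix.mulVec_mulVec, hpowx, Matrix.mulVec_smul, hQx,
      smul_zero]
  -- extract a nonzero real vector in the unobservable space
  have hrealparts : ∀ k : ℕ,
      (Qmat G α * M ^ k) *ᵥ (fun j => (x j).re) = 0 ∧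
      (Qmat G α * M ^ k) *ᵥ (fun j => (x j).im) = 0 := by
    intro k
    constructor
    · funext i
      have := congrArg Complex.re (congrFun (hQMkC k) i)
      simpa [Matrix.mulVec, dotProduct, Complex.re_sum, Complex.re_ofReal_mul] using this
    · funext i
      have := congrArg Complex.im (congrFun (hQMkC k) i)
      simpa [Matrix.mulVec, dotProduct, Complex.im_sum, Complex.im_ofReal_mul] using this
  obtain ⟨y, hy0, hyk⟩ : ∃ y : Fin n → ℝ, y ≠ 0 ∧
      ∀ k : ℕ, (Qmat G α * M ^ k) *ᵥ y = 0 := by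
    by_cases hre0 : (fun j => (x j).re) = 0
    · refine ⟨fun j => (x j).im, ?_, fun k => (hrealparts k).2⟩
      intro him0
      apply hx0
      funext j
      exact Complex.ext (congrFun hre0 j) (congrFun him0 j)
    · exact ⟨fun j => (x j).re, hre0, fun k => (hrealparts k).1⟩
  -- observability contradiction
  have hA3o' : (Matrix.of fun (i : Fin n) (p : Fin (Fintype.card (Fin n)) × Fin n) =>
      ((Mᵀ) ^ (p.1 : ℕ) * (Qmat G α)ᵀ) i p.2).rank = Fintype.card (Fin n) := hA3o
  set W : Matrix (Fin n) (Fin (Fintype.card (Fin n)) × Fin n) ℝ :=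
    Matrix.of fun (i : Fin n) (p : Fin (Fintype.card (Fin n)) × Fin n) =>
      ((Mᵀ) ^ (p.1 : ℕ) * (Qmat G α)ᵀ) i p.2 with hWdef
  have hWty : Wᵀ *ᵥ y = 0 := by
    funext p
    obtain ⟨k, j⟩ := p
    have hy := congrFun (hyk (k : ℕ)) j
    simp only [Matrix.mulVec, dotProduct, Pi.zero_apply] at hy ⊢
    have hentry : ∀ i, W i (k, j) = (Qmat G α * M ^ (k : ℕ)) j i := by
      intro i
      rw [hWdef]
      show ((Mᵀ) ^ (k : ℕ) * (Qmat G α)ᵀ) i j = _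
      rw [← Matrix.transpose_pow, ← Matrix.transpose_mul, Matrix.transpose_apply]
    simp only [Matrix.transpose_apply, hentry]
    exact hy
  have hker : y ∈ LinearMap.ker (Wᵀ).mulVecLin := by
    rw [LinearMap.mem_ker, Matrix.mulVecLin_apply]
    exact hWty
  have hkerpos : 0 < Module.finrank ℝ (LinearMap.ker (Wᵀ).mulVecLin) := by
    rcases Nat.eq_zero_or_pos (Module.finrank ℝ (LinearMap.ker (Wᵀ).mulVecLin)) with h0 | hpos
    · exfalso
      rw [Submodule.finrank_eq_zero] at h0
      rw [h0, Submodule.mem_bot] at hker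
      exact hy0 hker
    · exact hpos
  have hrn := LinearMap.finrank_range_add_finrank_ker (Wᵀ).mulVecLin
  have hdom : Module.finrank ℝ (Fin n → ℝ) = n := by
    rw [Module.finrank_fintype_fun_eq_card, Fintype.card_fin]
  have hrt : (Wᵀ).rank = Fintype.card (Fin n) := by
    rw [Matrix.rank_transpose]
    exact hA3o'
  rw [Matrix.rank] at hrt
  rw [hdom, hrt] at hrn
  simp only [Fintype.card_fin] at hrn
  omega
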